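/- arXiv:2211.16254 — 9 statements merged into one kernel-verified Lean document; each statement's English description precedes it below -/
import Mathlib

section
/- Let m ≥ 1, let D ⊆ ℝ^m be a convex set, let U : ℝ^m → ℝ be strictly convex on D, and let L : ℝ^m → ℝ be a linear map with L(y) > 0 for every y ∈ D. Define s(y) = −U(y)/L(y) on D. Then for all y₁, y₂ ∈ D with y₁ ≠ y₂ and all β ∈ (0,1), one has s(β y₁ + (1−β) y₂) > min{ s(y₁), s(y₂) }. -/
/-- Quasi-concavity of the specific thermodynamic entropy `s = -U/L`
(abstract form of Lemma A.1): `U` strictly convex on the convex set `D`,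
`L` linear and positive on `D`. -/
theorem quasiConcavity_specific_entropy
    (m : ℕ) (hm : 1 ≤ m)
    (D : Set (Fin m → ℝ)) (hD : Convex ℝ D)
    (U : (Fin m → ℝ) → ℝ) (hU : StrictConvexOn ℝ D U)
    (L : (Fin m → ℝ) →ₗ[ℝ] ℝ) (hL : ∀ y ∈ D, 0 < L y)
    (s : (Fin m → ℝ) → ℝ) (hs : ∀ y ∈ D, s y = -U y / L y)
    (y₁ y₂ : Fin m → ℝ) (hy₁ : y₁ ∈ D) (hy₂ : y₂ ∈ D) (hne : y₁ ≠ y₂)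
    (β : ℝ) (hβ : β ∈ Set.Ioo (0 : ℝ) 1) :
    min (s y₁) (s y₂) < s (β • y₁ + (1 - β) • y₂) := by
  obtain ⟨hβ0, hβ1⟩ := hβ
  have hβ1' : 0 < 1 - β := by linarith
  have hsum : β + (1 - β) = 1 := by ring
  set yβ := β • y₁ + (1 - β) • y₂ with hyβ
  have hyβD : yβ ∈ D := hD hy₁ hy₂ hβ0.le hβ1'.le hsum
  have hL1 : 0 < L y₁ := hL _ hy₁
  have hL2 : 0 < L y₂ := hL _ hy₂
  have hLβ : L yβ = β * L y₁ + (1 - β) * L y₂ := by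
    simp [hyβ, map_add, map_smul, smul_eq_mul]
  have hLβpos : 0 < L yβ := by
    rw [hLβ]; positivity
  have hUβ : U yβ < β * U y₁ + (1 - β) * U y₂ :=
    hU.2 hy₁ hy₂ hne hβ0 hβ1' hsum
  set M := min (s y₁) (s y₂) with hM
  have h1 : M * L y₁ ≤ -U y₁ := by
    have : M ≤ -U y₁ / L y₁ := by rw [← hs y₁ hy₁]; exact min_le_left _ _
    calc M * L y₁ ≤ (-U y₁ / L y₁) * L y₁ := by nlinarith
      _ = -U y₁ := div_mul_cancel₀ _ hL1.ne'
  have h2 : M * L y₂ ≤ -U y₂ := by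
    have : M ≤ -U y₂ / L y₂ := by rw [← hs y₂ hy₂]; exact min_le_right _ _
    calc M * L y₂ ≤ (-U y₂ / L y₂) * L y₂ := by nlinarith
      _ = -U y₂ := div_mul_cancel₀ _ hL2.ne'
  have key : M * L yβ < -U yβ := by
    rw [hLβ]; nlinarith
  rw [hs yβ hyβD, lt_div_iff₀ hLβpos]
  exact key
end

section
/- Let m ≥ 1, let D ⊆ ℝ^m be a convex set, let U : ℝ^m → ℝ be convex on D, and let L : ℝ^m → ℝ be a linear map with L(y) > 0 for y ∈ D. Define s(y) = −U(y)/L(y) on D. Let κ ⊂ ℝ^d be a compact set with positive finite Lebesgue measure |κ|, and let y : κ → D be continuous with average ȳ = (1/|κ|) ∫_κ y(x) dx, and assume ȳ ∈ D. Then s(ȳ) ≥ min_{x ∈ κ} s(y(x)). -/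
open MeasureTheory


private lemma sum_pad_dite {M : Type*} [AddCommMonoid M] {N k : ℕ} (hk : k ≤ N)
    (g : Fin k → M) :
    (∑ i : Fin N, if h : (i : ℕ) < k then g ⟨i, h⟩ else 0) = ∑ j : Fin k, g j := by
  rw [Fin.sum_univ_eq_sum_range (fun i => if h : i < k then g ⟨i, h⟩ else 0) N]
  have h2 : (∑ i ∈ Finset.range k, if h : i < k then g ⟨i, h⟩ else 0) = ∑ j : Fin k, g j := by
    rw [← Fin.sum_univ_eq_sum_range (fun i => if h : i < k then g ⟨i, h⟩ else 0) k]
    exact Finset.sum_congr rfl fun j _ => by simp [j.isLt]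
  rw [← h2]
  refine (Finset.sum_subset (Finset.range_subset_range.mpr hk) fun i _ hi => ?_).symm
  rw [Finset.mem_range, not_lt] at hi
  rw [dif_neg (not_lt.mpr hi)]

private lemma sum_pad_finset {M : Type*} [AddCommMonoid M] {E : Type*} {N : ℕ}
    (t : Finset E) (hcard : t.card ≤ N) (f : E → M) :
    (∑ i : Fin N, if h : (i : ℕ) < t.card then f ((t.equivFin.symm ⟨i, h⟩ : t) : E) else 0)
      = ∑ y ∈ t, f y := by
  rw [sum_pad_dite hcard (fun j => f ((t.equivFin.symm j : t) : E)),
    Equiv.sum_comp t.equivFin.symm (fun y : t => f (y : E))]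
  exact Finset.sum_coe_sort t f

set_option maxHeartbeats 1000000 in
private lemma aux_isCompact_convexHull {n : ℕ} {s : Set (Fin n → ℝ)} (hs : IsCompact s) :
    IsCompact (convexHull ℝ s) := by
  rcases s.eq_empty_or_nonempty with rfl | ⟨z, hz⟩
  · simpa using isCompact_empty
  have himg : convexHull ℝ s =
      (fun wp : (Fin (n + 2) → ℝ) × (Fin (n + 2) → Fin n → ℝ) => ∑ i, wp.1 i • wp.2 i) ''
        (stdSimplex ℝ (Fin (n + 2)) ×ˢ Set.univ.pi fun _ : Fin (n + 2) => s) := by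
    apply Set.Subset.antisymm
    · intro x hx
      rw [convexHull_eq_union] at hx
      simp only [Set.mem_iUnion] at hx
      obtain ⟨t, hts, hai, hx⟩ := hx
      have hcard : t.card ≤ n + 2 := by
        have h1 := hai.card_le_finrank_succ
        rw [Fintype.card_coe] at h1
        have h2 : Module.finrank ℝ (vectorSpan ℝ (Set.range ((↑) : t → Fin n → ℝ))) ≤ n := by
          have h3 := Submodule.finrank_le (vectorSpan ℝ (Set.range ((↑) : t → Fin n → ℝ)))
          simpa [Module.finrank_fintype_fun_eq_card] using h3
        omega
      rw [Finset.convexHull_eq] at hx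
      obtain ⟨w, hw0, hw1, hwx⟩ := hx
      rw [t.centerMass_eq_of_sum_1 _ hw1] at hwx
      refine ⟨(fun i => if h : (i : ℕ) < t.card then w ((t.equivFin.symm ⟨i, h⟩ : t) : Fin n → ℝ) else 0,
               fun i => if h : (i : ℕ) < t.card then ((t.equivFin.symm ⟨i, h⟩ : t) : Fin n → ℝ) else z),
             ⟨⟨fun i => ?_, ?_⟩, fun i _ => ?_⟩, ?_⟩
      · dsimp only; split_ifs with h
        · exact hw0 _ (t.equivFin.symm ⟨i, h⟩).2
        · exact le_refl 0
      · exact (sum_pad_finset t hcard w).trans hw1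
      · dsimp only; split_ifs with h
        · exact hts (t.equivFin.symm ⟨i, h⟩).2
        · exact hz
      · dsimp only
        have hterm : ∀ i : Fin (n + 2),
            (if h : (i : ℕ) < t.card then w ((t.equivFin.symm ⟨i, h⟩ : t) : Fin n → ℝ) else 0) •
              (if h : (i : ℕ) < t.card then ((t.equivFin.symm ⟨i, h⟩ : t) : Fin n → ℝ) else z) =
            if h : (i : ℕ) < t.card then
              (fun y => w y • y) ((t.equivFin.symm ⟨i, h⟩ : t) : Fin n → ℝ) else 0 := by
          intro i; split_ifs with h
          · rfl
          · exact zero_smul ℝ z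
        rw [Finset.sum_congr rfl fun i _ => hterm i,
          sum_pad_finset t hcard (fun y => w y • y)]
        exact hwx
    · rintro _ ⟨⟨w, p⟩, ⟨hw, hpm⟩, rfl⟩
      exact (convex_convexHull ℝ s).sum_mem (fun i _ => hw.1 i) hw.2
        (fun i _ => subset_convexHull ℝ s (hpm i (Set.mem_univ i)))
  rw [himg]
  exact ((IsCompact.prod (isCompact_stdSimplex (𝕜 := ℝ) (ι := Fin (n + 2))) (isCompact_univ_pi fun _ => hs))).image
    (continuous_finset_sum _ fun i _ =>
      ((continuous_apply i).comp continuous_fst).smul ((continuous_apply i).comp continuous_snd))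

/-- Lemma A.2 (specific entropy of the element average): with `U` convex on the
convex set `D`, `L` linear and positive on `D`, and `s = -U/L`, the specific
entropy of the average of a continuous `D`-valued field over a compact set `κ`
of positive finite measure is at least the minimum of `s ∘ y` over `κ`
(here expressed via a minimizer `x₀`). -/
theorem specific_entropy_of_average
    (m d : ℕ) (hm : 1 ≤ m) (hd : 1 ≤ d)
    (D : Set (Fin m → ℝ)) (hD : Convex ℝ D)
    (U : (Fin m → ℝ) → ℝ) (hU : ConvexOn ℝ D U)
    (L : (Fin m → ℝ) →ₗ[ℝ] ℝ) (hL : ∀ y ∈ D, 0 < L y)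
    (s : (Fin m → ℝ) → ℝ) (hs : ∀ y ∈ D, s y = -U y / L y)
    (κ : Set (Fin d → ℝ)) (hκc : IsCompact κ)
    (hκpos : 0 < volume κ) (hκfin : volume κ < ⊤)
    (y : (Fin d → ℝ) → (Fin m → ℝ)) (hy : ContinuousOn y κ)
    (hyD : ∀ x ∈ κ, y x ∈ D)
    (ybar : Fin m → ℝ)
    (hybar : ybar = (volume κ).toReal⁻¹ • ∫ x in κ, y x)
    (hybarD : ybar ∈ D)
    (x₀ : Fin d → ℝ) (hx₀ : x₀ ∈ κ)
    (hmin : ∀ x ∈ κ, s (y x₀) ≤ s (y x)) :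
    s (y x₀) ≤ s ybar := by

  set c := s (y x₀) with hc
  -- the average lies in the convex hull of the image
  have hyint : MeasureTheory.IntegrableOn y κ := hy.integrableOn_compact hκc
  have havg : (⨍ x in κ, y x) = ybar := by
    rw [setAverage_eq, hybar]
    rfl
  have hmemhull : ybar ∈ convexHull ℝ (y '' κ) := by
    rw [← havg]
    refine (convex_convexHull ℝ (y '' κ)).set_average_mem
      (aux_isCompact_convexHull (hκc.image_of_continuousOn hy)).isClosed hκpos.ne' hκfin.ne ?_ hyint
    filter_upwards [ae_restrict_mem hκc.measurableSet] with x hx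
    exact subset_convexHull ℝ _ ⟨x, hx, rfl⟩
  -- the convex function V = U + c • L
  have hV : ConvexOn ℝ D (fun z => U z + c * L z) := by
    refine hU.add ⟨hD, fun p hp q hq a b ha hb hab => ?_⟩
    simp only [map_add, LinearMap.map_smul, smul_eq_mul]
    ring_nf
    exact le_refl _
  have hts : y '' κ ⊆ D := by rintro _ ⟨x, hx, rfl⟩; exact hyD x hx
  obtain ⟨p, hp, hle⟩ := hV.exists_ge_of_mem_convexHull hts hmemhull
  obtain ⟨x, hx, rfl⟩ := hp
  -- V ≤ 0 on the image
  have hVx : U (y x) + c * L (y x) ≤ 0 := by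
    have hLpos := hL (y x) (hyD x hx)
    have h1 : c ≤ -U (y x) / L (y x) := by
      rw [← hs (y x) (hyD x hx)]; exact hmin x hx
    have := (le_div_iff₀ hLpos).mp h1
    linarith
  have hVbar : U ybar + c * L ybar ≤ 0 := le_trans hle hVx
  have hLbar := hL ybar hybarD
  rw [hs ybar hybarD, le_div_iff₀ hLbar]
  linarith
end

section
/- Let m ≥ 1, let D ⊆ ℝ^m be a convex set, let U : ℝ^m → ℝ be convex on D, and let L : ℝ^m → ℝ be a linear map with L(y) > 0 for y ∈ D. Define s(y) = −U(y)/L(y) on D. Let y₁, …, y_N ∈ D and let w₁, …, w_N ≥ 0 with Σ_{j=1}^N w_j = 1. Then s(Σ_{j=1}^N w_j y_j) ≥ min_{j=1,…,N} s(y_j). -/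
/-- Finite convex-combination version of the entropy-of-the-average lemma:
with `U` convex on the convex set `D`, `L` linear and positive on `D`, and
`s = -U/L`, the specific entropy of any convex combination of states in `D`
is at least the minimum of the specific entropies of those states. -/
theorem specific_entropy_of_convex_combination
    (m N : ℕ) (hm : 1 ≤ m) (hN : 0 < N)
    (D : Set (Fin m → ℝ)) (hD : Convex ℝ D)
    (U : (Fin m → ℝ) → ℝ) (hU : ConvexOn ℝ D U)
    (L : (Fin m → ℝ) →ₗ[ℝ] ℝ) (hL : ∀ y ∈ D, 0 < L y)
    (s : (Fin m → ℝ) → ℝ) (hs : ∀ y ∈ D, s y = -U y / L y)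
    (y : Fin N → (Fin m → ℝ)) (hy : ∀ j, y j ∈ D)
    (w : Fin N → ℝ) (hw : ∀ j, 0 ≤ w j) (hwsum : ∑ j, w j = 1) :
    Finset.univ.inf' ⟨⟨0, hN⟩, Finset.mem_univ _⟩ (fun j => s (y j))
      ≤ s (∑ j, w j • y j) := by
  set σ := Finset.univ.inf' ⟨⟨0, hN⟩, Finset.mem_univ _⟩ (fun j => s (y j)) with hσ
  have hmem : (∑ j, w j • y j) ∈ D :=
    hD.sum_mem (fun j _ => hw j) hwsum (fun j _ => hy j)
  have hLpos : 0 < L (∑ j, w j • y j) := hL _ hmem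
  have hUle : U (∑ j, w j • y j) ≤ ∑ j, w j * U (y j) :=
    hU.map_sum_le (fun j _ => hw j) hwsum (fun j _ => hy j)
  have hLsum : L (∑ j, w j • y j) = ∑ j, w j * L (y j) := by
    simp [map_sum, map_smul, smul_eq_mul]
  have hkey : ∀ j, w j * U (y j) ≤ w j * (-σ * L (y j)) := by
    intro j
    refine mul_le_mul_of_nonneg_left ?_ (hw j)
    have hσj : σ ≤ s (y j) := Finset.inf'_le _ (Finset.mem_univ j)
    have hLj := hL _ (hy j)
    have := hs _ (hy j)
    rw [this, le_div_iff₀ hLj] at hσj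
    nlinarith
  have hU2 : U (∑ j, w j • y j) ≤ -σ * L (∑ j, w j • y j) := by
    calc U (∑ j, w j • y j) ≤ ∑ j, w j * U (y j) := hUle
      _ ≤ ∑ j, w j * (-σ * L (y j)) := Finset.sum_le_sum (fun j _ => hkey j)
      _ = -σ * ∑ j, w j * L (y j) := by rw [Finset.mul_sum]; congr 1; ext j; ring
      _ = -σ * L (∑ j, w j • y j) := by rw [hLsum]
  rw [hs _ hmem, le_div_iff₀ hLpos]
  nlinarith
end

section
/- Let n_s, n_r ≥ 1, let W_i > 0 for i = 1,…,n_s, let ν^f_{ij}, ν^r_{ij} be real numbers (forward and reverse stoichiometric coefficients), let K^s_j > 0 for j = 1,…,n_r, and let μ ∈ ℝ^{n_s}. Define the rates of progress q_j = K^s_j [ exp( Σ_{i=1}^{n_s} ν^f_{ij} W_i μ_i ) − exp( Σ_{i=1}^{n_s} ν^r_{ij} W_i μ_i ) ] and the production rates ω_i = Σ_{j=1}^{n_r} (ν^r_{ij} − ν^f_{ij}) q_j. Then Σ_{i=1}^{n_s} W_i μ_i ω_i ≤ 0. -/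
lemma exp_diff_mul_nonpos (a b : ℝ) : (Real.exp a - Real.exp b) * (b - a) ≤ 0 := by
  rcases le_total a b with h | h
  · apply mul_nonpos_of_nonpos_of_nonneg
    · simpa using Real.exp_le_exp.2 h
    · linarith
  · apply mul_nonpos_of_nonneg_of_nonpos
    · simpa using Real.exp_le_exp.2 h
    · linarith

/-- Nonpositivity of the chemical entropy production rate (Section 4.2):
for a mass-action system with rates of progress
`q_j = K^s_j [exp((Wν^f_j)ᵀμ) − exp((Wν^r_j)ᵀμ)]` and production rates
`ω_i = Σ_j (ν^r_{ij} − ν^f_{ij}) q_j`, one has `Σ_i W_i μ_i ω_i ≤ 0`. -/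
theorem chemical_entropy_production_nonpositive
    (ns nr : ℕ) (hns : 1 ≤ ns) (hnr : 1 ≤ nr)
    (W : Fin ns → ℝ) (hW : ∀ i, 0 < W i)
    (νf νr : Fin ns → Fin nr → ℝ)
    (Ks : Fin nr → ℝ) (hKs : ∀ j, 0 < Ks j)
    (μ : Fin ns → ℝ)
    (q : Fin nr → ℝ)
    (hq : ∀ j, q j = Ks j *
      (Real.exp (∑ i, νf i j * W i * μ i) - Real.exp (∑ i, νr i j * W i * μ i)))
    (ω : Fin ns → ℝ)
    (hω : ∀ i, ω i = ∑ j, (νr i j - νf i j) * q j) :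
    ∑ i, W i * μ i * ω i ≤ 0 := by
  have key : ∑ i, W i * μ i * ω i
      = ∑ j, Ks j * ((Real.exp (∑ i, νf i j * W i * μ i)
          - Real.exp (∑ i, νr i j * W i * μ i))
        * ((∑ i, νr i j * W i * μ i) - (∑ i, νf i j * W i * μ i))) := by
    simp only [hω, hq, Finset.mul_sum]
    rw [Finset.sum_comm]
    refine Finset.sum_congr rfl fun j _ => ?_
    rw [← Finset.sum_sub_distrib, Finset.mul_sum, Finset.mul_sum]
    exact Finset.sum_congr rfl fun i _ => by ring
  rw [key]
  apply Finset.sum_nonpos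
  intro j _
  exact mul_nonpos_of_nonneg_of_nonpos (hKs j).le (exp_diff_mul_nonpos _ _)
end

section
/- Let m ≥ 1, let 𝒢 ⊆ ℝ^m be a convex set, let h > 0 and λ > 0, and let F† : ℝ^m × ℝ^m × {−1, 1} → ℝ^m be a numerical flux satisfying the conservation property F†(a, b, 1) = −F†(b, a, −1) for all a, b, and the invariant-region-preserving property: for every Δτ > 0 with Δτ λ / h ≤ 1/2 and all a, b, c ∈ 𝒢, a − (Δτ/h)[F†(a, b, −1) + F†(a, c, 1)] ∈ 𝒢. Let θ_L > 0, θ_R > 0, θ_1, …, θ_{n_q} ≥ 0 with Σ_q θ_q + θ_L + θ_R = 1, and let y(x_1), …, y(x_{n_q}), y(x_L), y(x_R), y_L^−, y_R^− ∈ 𝒢 with ȳ = Σ_q θ_q y(x_q) + θ_L y(x_L) + θ_R y(x_R). Then for every Δt > 0 with Δt λ / h ≤ (1/2) min{θ_L, θ_R}, the updated average ȳ⁺ = ȳ − (Δt/h)[ F†(y(x_L), y_L^−, −1) + F†(y(x_R), y_R^−, 1) ] belongs to 𝒢. -/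
/-- Theorem 5.1 (CFL condition for the one-dimensional entropy-bounded DG
scheme): if the numerical flux `F` is conservative and invariant-region
preserving for the convex set `G` under the first-order CFL condition
`Δτ λ / h ≤ 1/2`, and the element average `ȳ` is a convex combination of
admissible pointwise values, then the forward-Euler updated element average
remains in `G` under `Δt λ / h ≤ (1/2) min{θ_L, θ_R}`. -/
theorem entropy_bounded_DG_CFL
    (m nq : ℕ) (hm : 1 ≤ m)
    (G : Set (Fin m → ℝ)) (hG : Convex ℝ G)
    (h lam : ℝ) (hh : 0 < h) (hlam : 0 < lam)
    (F : (Fin m → ℝ) → (Fin m → ℝ) → ℝ → (Fin m → ℝ))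
    (hcons : ∀ a b, F a b 1 = -F b a (-1))
    (hirp : ∀ Δτ : ℝ, 0 < Δτ → Δτ * lam / h ≤ 1 / 2 →
      ∀ a ∈ G, ∀ b ∈ G, ∀ c ∈ G,
        a - (Δτ / h) • (F a b (-1) + F a c 1) ∈ G)
    (θL θR : ℝ) (θ : Fin nq → ℝ)
    (hθL : 0 < θL) (hθR : 0 < θR) (hθ : ∀ q, 0 ≤ θ q)
    (hθsum : (∑ q, θ q) + θL + θR = 1)
    (yq : Fin nq → (Fin m → ℝ)) (yL yR yLm yRm : Fin m → ℝ)
    (hyq : ∀ q, yq q ∈ G) (hyL : yL ∈ G) (hyR : yR ∈ G)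
    (hyLm : yLm ∈ G) (hyRm : yRm ∈ G)
    (ybar : Fin m → ℝ)
    (hybar : ybar = (∑ q, θ q • yq q) + θL • yL + θR • yR)
    (Δt : ℝ) (hΔt : 0 < Δt)
    (hCFL : Δt * lam / h ≤ (1 / 2) * min θL θR) :
    ybar - (Δt / h) • (F yL yLm (-1) + F yR yRm 1) ∈ G := by
  have hτL : (0:ℝ) < Δt / θL := div_pos hΔt hθL
  have hτR : (0:ℝ) < Δt / θR := div_pos hΔt hθR
  have hCFLL : (Δt / θL) * lam / h ≤ 1 / 2 := by
    have e : Δt / θL * lam / h = (Δt * lam / h) / θL := by ring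
    rw [e, div_le_iff₀ hθL]
    have hmin := min_le_left θL θR
    nlinarith [hCFL]
  have hCFLR : (Δt / θR) * lam / h ≤ 1 / 2 := by
    have e : Δt / θR * lam / h = (Δt * lam / h) / θR := by ring
    rw [e, div_le_iff₀ hθR]
    have hmin := min_le_right θL θR
    nlinarith [hCFL]
  set zL := yL - ((Δt / θL) / h) • (F yL yLm (-1) + F yL yR 1) with hzL
  set zR := yR - ((Δt / θR) / h) • (F yR yL (-1) + F yR yRm 1) with hzR
  have hzLmem : zL ∈ G := hirp _ hτL hCFLL yL hyL yLm hyLm yR hyR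
  have hzRmem : zR ∈ G := hirp _ hτR hCFLR yR hyR yL hyL yRm hyRm
  have eL : θL * ((Δt / θL) / h) = Δt / h := by field_simp
  have eR : θR * ((Δt / θR) / h) = Δt / h := by field_simp
  have hLz : θL • zL = θL • yL - (Δt / h) • F yL yLm (-1) - (Δt / h) • F yL yR 1 := by
    rw [hzL, smul_sub, smul_smul, eL, smul_add]; abel
  have hRz : θR • zR = θR • yR - (Δt / h) • F yR yL (-1) - (Δt / h) • F yR yRm 1 := by
    rw [hzR, smul_sub, smul_smul, eR, smul_add]; abel
  have key : ybar - (Δt / h) • (F yL yLm (-1) + F yR yRm 1)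
      = (∑ q, θ q • yq q) + θL • zL + θR • zR := by
    rw [hybar, hLz, hRz, hcons yL yR, smul_neg, smul_add]
    abel
  rw [key]
  -- convex combination over a Sum index type
  set w : Sum (Fin nq) (Fin 2) → ℝ := Sum.elim θ ![θL, θR] with hw
  set p : Sum (Fin nq) (Fin 2) → (Fin m → ℝ) := Sum.elim yq ![zL, zR] with hp
  have hmem : ∑ i : Sum (Fin nq) (Fin 2), w i • p i ∈ G := by
    apply hG.sum_mem
    · intro i _
      rcases i with q | j
      · exact hθ q
      · fin_cases j
        · exact hθL.le
        · exact hθR.le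
    · rw [Fintype.sum_sum_type]
      simp only [hw, Sum.elim_inl, Sum.elim_inr, Fin.sum_univ_two,
        Matrix.cons_val_zero, Matrix.cons_val_one, Matrix.head_cons]
      linarith [hθsum]
    · intro i _
      rcases i with q | j
      · exact hyq q
      · fin_cases j
        · exact hzLmem
        · exact hzRmem
  have hsum : ∑ i : Sum (Fin nq) (Fin 2), w i • p i
      = (∑ q, θ q • yq q) + θL • zL + θR • zR := by
    rw [Fintype.sum_sum_type]
    simp [hw, hp, Fin.sum_univ_two, add_assoc]
  rwa [hsum] at hmem
end

section
/- Fix d ≥ 1, an integer n_p ≥ 0, a molecular weight W > 0, a universal constant R⁰ > 0, and set R_s = R⁰/W. Fix polynomial coefficients a₀, …, a_{n_p} and reference constants T_ref > 0, C_ref > 0, s_ref°. Define b₁ = a₀ − R_s, b_k = a_{k−1}/k for 2 ≤ k ≤ n_p+1, and fix b₀ ∈ ℝ. For T > 0 and ρ > 0 define u(T) = Σ_{k=0}^{n_p+1} b_k T^k, h(T) = u(T) + R_s T, s(T, ρ) = s_ref° + ∫_{T_ref}^T (Σ_{k=0}^{n_p} a_k τ^k − R_s)/τ dτ − R_s log(ρ/(W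 C_ref)), and g(T, ρ) = h(T) − T s(T, ρ). For two states (T_L, ρ_L, v_L) and (T_R, ρ_R, v_R) with T_L, T_R, ρ_L, ρ_R > 0 and v_L, v_R ∈ ℝ^d, define for any quantity α the jump [[α]] = α_R − α_L, the arithmetic mean ⟨α⟩ = (α_L+α_R)/2, the product α^× = α_L α_R, the logarithmic mean α^ln = (α_R − α_L)/(log α_R − log α_L) if α_L ≠ α_R and α^ln = α_L if α_L = α_R (for positive arguments), and f_r(a,b) = (1/r) Σ_{l=0}^{r−1} a^l b^{r−1−l}. Then [[ (g − ½ Σ_{k=1}^d v_k²)/T ]] = [[1/T]] · 𝖷 + R_s [[ρ]]/ρ^ln − Σ_{k=1}^d [[v_k]] ⟨1/T⟩ ⟨v_k⟩, where 𝖷 = b₀ + b₁/(1/T)^ln + Σ_{r=2}^{n_p+1} b_r f_{r−1}(T_L, T_R) T^× − ½ Σ_{k=1}^d ⟨v_k²⟩. -/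
/-- Logarithmic mean of two (positive) reals. -/
noncomputable def logMean (x y : ℝ) : ℝ :=
  if x = y then x else (y - x) / (Real.log y - Real.log x)

/-- The special averaging operator `f_r(a,b) = (1/r) Σ_{l<r} aˡ b^{r−1−l}`. -/
noncomputable def fAvg (r : ℕ) (a b : ℝ) : ℝ :=
  (1 / (r : ℝ)) * ∑ l ∈ Finset.range r, a ^ l * b ^ (r - 1 - l)

lemma jump_div_logMean (x y : ℝ) (hx : 0 < x) (hy : 0 < y) :
    (y - x) / logMean x y = Real.log y - Real.log x := by
  unfold logMean
  by_cases hxy : x = y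
  · simp [hxy]
  · rw [if_neg hxy]
    have hlog : Real.log y - Real.log x ≠ 0 := by
      intro hc
      exact hxy (Real.log_injOn_pos (Set.mem_Ioi.mpr hx) (Set.mem_Ioi.mpr hy)
        (by linarith))
    have hyx : y - x ≠ 0 := sub_ne_zero.mpr (Ne.symm hxy)
    field_simp

lemma int_eval (np : ℕ) (a : ℕ → ℝ) (Rs Tref T : ℝ) (h1 : 0 < Tref) (h2 : 0 < T) :
    (∫ τ in Tref..T, ((∑ k ∈ Finset.range (np + 1), a k * τ ^ k) - Rs) / τ)
      = ((a 0 - Rs) * Real.log T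
          + ∑ k ∈ Finset.range np, (a (k + 1) / ((k : ℝ) + 1)) * T ^ (k + 1))
        - ((a 0 - Rs) * Real.log Tref
          + ∑ k ∈ Finset.range np, (a (k + 1) / ((k : ℝ) + 1)) * Tref ^ (k + 1)) := by
  set f : ℝ → ℝ := fun τ => ((∑ k ∈ Finset.range (np + 1), a k * τ ^ k) - Rs) / τ with hf
  set F : ℝ → ℝ := fun x => (a 0 - Rs) * Real.log x
      + ∑ k ∈ Finset.range np, (a (k + 1) / ((k : ℝ) + 1)) * x ^ (k + 1) with hF
  have hpos : ∀ x ∈ Set.uIcc Tref T, 0 < x := by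
    intro x hx
    exact lt_of_lt_of_le (lt_min h1 h2) hx.1
  have hderiv : ∀ x ∈ Set.uIcc Tref T, HasDerivAt F (f x) x := by
    intro x hx
    have hx0 : x ≠ 0 := ne_of_gt (hpos x hx)
    have hD : HasDerivAt F ((a 0 - Rs) * x⁻¹
        + ∑ k ∈ Finset.range np, (a (k + 1) / ((k : ℝ) + 1)) * (((k:ℝ) + 1) * x ^ k)) x := by
      apply HasDerivAt.add
      · exact (Real.hasDerivAt_log hx0).const_mul _
      · have := HasDerivAt.fun_sum (u := Finset.range np)
          (A := fun k x => (a (k + 1) / ((k : ℝ) + 1)) * x ^ (k + 1))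
          (A' := fun k => (a (k + 1) / ((k : ℝ) + 1)) * (((k:ℝ) + 1) * x ^ k))
          (fun k _ => by
            have hp := hasDerivAt_pow (k + 1) x
            have hp' : HasDerivAt (fun y : ℝ => y ^ (k+1)) (((k:ℝ)+1) * x ^ k) x := by
              convert hp using 1
              push_cast
              rfl
              simp
            exact hp'.const_mul _)
        exact this
    convert hD using 1
    have hsum : ∀ k ∈ Finset.range np,
        (a (k + 1) / ((k : ℝ) + 1)) * (((k:ℝ) + 1) * x ^ k) = a (k + 1) * x ^ k := by
      intro k _
      have hk : ((k:ℝ) + 1) ≠ 0 := by positivity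
      field_simp
    rw [Finset.sum_congr rfl hsum, hf]
    simp only
    rw [Finset.sum_range_succ']
    have : ∑ k ∈ Finset.range np, a (k + 1) * x ^ (k + 1)
        = (∑ k ∈ Finset.range np, a (k + 1) * x ^ k) * x := by
      rw [Finset.sum_mul]
      exact Finset.sum_congr rfl fun k _ => by ring
    rw [this]
    field_simp
    ring
  have hint : IntervalIntegrable f MeasureTheory.volume Tref T := by
    apply ContinuousOn.intervalIntegrable
    apply ContinuousOn.div
    · exact ((continuous_finset_sum _ fun k _ =>
        (continuous_const.mul (continuous_pow k))).sub continuous_const).continuousOn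
    · exact continuousOn_id
    · exact fun x hx => ne_of_gt (hpos x hx)
  have := intervalIntegral.integral_eq_sub_of_hasDerivAt hderiv hint
  rw [this]

lemma sumP (np : ℕ) (a b : ℕ → ℝ)
    (hbk : ∀ k, 2 ≤ k → k ≤ np + 1 → b k = a (k - 1) / (k : ℝ))
    (TL TR : ℝ) (hTL : 0 < TL) (hTR : 0 < TR) :
    (1 / TR - 1 / TL) * ∑ r ∈ Finset.Icc 2 (np + 1), b r * fAvg (r - 1) TL TR * (TL * TR)
      = (∑ k ∈ Finset.range np, b (k + 2) * TR ^ (k + 1))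
        - (∑ k ∈ Finset.range np, b (k + 2) * TL ^ (k + 1))
        - (∑ k ∈ Finset.range np, (a (k + 1) / ((k : ℝ) + 1)) * TR ^ (k + 1))
        + (∑ k ∈ Finset.range np, (a (k + 1) / ((k : ℝ) + 1)) * TL ^ (k + 1)) := by
  have hre : (∑ r ∈ Finset.Icc 2 (np + 1), b r * fAvg (r - 1) TL TR * (TL * TR))
      = ∑ k ∈ Finset.range np, b (2 + k) * fAvg (2 + k - 1) TL TR * (TL * TR) := by
    rw [← Finset.Ico_add_one_right_eq_Icc, Finset.sum_Ico_eq_sum_range]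
    congr 1
  rw [hre, Finset.mul_sum]
  have hcomb : (∑ k ∈ Finset.range np, b (k + 2) * TR ^ (k + 1))
        - (∑ k ∈ Finset.range np, b (k + 2) * TL ^ (k + 1))
        - (∑ k ∈ Finset.range np, (a (k + 1) / ((k : ℝ) + 1)) * TR ^ (k + 1))
        + (∑ k ∈ Finset.range np, (a (k + 1) / ((k : ℝ) + 1)) * TL ^ (k + 1))
      = ∑ k ∈ Finset.range np, (b (k + 2) * TR ^ (k + 1) - b (k + 2) * TL ^ (k + 1)
          - (a (k + 1) / ((k : ℝ) + 1)) * TR ^ (k + 1)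
          + (a (k + 1) / ((k : ℝ) + 1)) * TL ^ (k + 1)) := by
    rw [Finset.sum_add_distrib, Finset.sum_sub_distrib, Finset.sum_sub_distrib]
  rw [hcomb]
  apply Finset.sum_congr rfl
  intro k hk
  have hk' : k < np := Finset.mem_range.mp hk
  have h2k : 2 + k = k + 2 := by omega
  rw [h2k]
  have hb : b (k + 2) = a (k + 1) / ((k : ℝ) + 2) := by
    rw [hbk (k + 2) (by omega) (by omega)]
    push_cast
    norm_num
  have hG := geom_sum₂_mul TL TR (k + 1)
  set G := ∑ i ∈ Finset.range (k + 1), TL ^ i * TR ^ (k + 1 - 1 - i) with hGdef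
  have hfa : fAvg (k + 2 - 1) TL TR = (1 / ((k : ℝ) + 1)) * G := by
    unfold fAvg
    push_cast
    rfl
  rw [hfa, hb]
  have hpowR : TR ^ (k + 1) - TL ^ (k + 1) = G * (TR - TL) := by linear_combination hG
  have hk1 : ((k : ℝ) + 1) ≠ 0 := by positivity
  have hk2 : ((k : ℝ) + 2) ≠ 0 := by positivity
  have hR : a (k + 1) / ((k:ℝ) + 2) * TR ^ (k + 1) - a (k + 1) / ((k:ℝ) + 2) * TL ^ (k + 1)
        - a (k + 1) / ((k:ℝ) + 1) * TR ^ (k + 1) + a (k + 1) / ((k:ℝ) + 1) * TL ^ (k + 1)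
      = (a (k + 1) / ((k:ℝ) + 2) - a (k + 1) / ((k:ℝ) + 1)) * (G * (TR - TL)) := by
    rw [← hpowR]
    ring
  rw [hR]
  field_simp
  ring

/-- Species-component jump identity (Equation (49)) underlying the
entropy-conservative two-point numerical state: for a thermally perfect gas
with `c_p(T) = Σ_k a_k T^k`, internal energy `u`, enthalpy `h = u + R_s T`,
entropy `s`, and Gibbs function `g = h − T s`, the jump of the entropy variable
`(g − ½|v|²)/T` decomposes into jumps of `1/T`, `ρ`, and `v_k`. -/
theorem species_entropy_variable_jump_identity
    (d np : ℕ) (hd : 1 ≤ d)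
    (W R0 : ℝ) (hW : 0 < W) (hR0 : 0 < R0)
    (Rs : ℝ) (hRsdef : Rs = R0 / W)
    (a : ℕ → ℝ) (Tref Cref sref : ℝ) (hTref : 0 < Tref) (hCref : 0 < Cref)
    (b : ℕ → ℝ) (hb1 : b 1 = a 0 - Rs)
    (hbk : ∀ k, 2 ≤ k → k ≤ np + 1 → b k = a (k - 1) / (k : ℝ))
    (u h : ℝ → ℝ) (s g : ℝ → ℝ → ℝ)
    (hu : ∀ T, u T = ∑ k ∈ Finset.range (np + 2), b k * T ^ k)
    (hh : ∀ T, h T = u T + Rs * T)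
    (hs : ∀ T ρ, s T ρ = sref
      + (∫ τ in Tref..T, ((∑ k ∈ Finset.range (np + 1), a k * τ ^ k) - Rs) / τ)
      - Rs * Real.log (ρ / (W * Cref)))
    (hg : ∀ T ρ, g T ρ = h T - T * s T ρ)
    (TL TR ρL ρR : ℝ) (hTL : 0 < TL) (hTR : 0 < TR) (hρL : 0 < ρL) (hρR : 0 < ρR)
    (vL vR : Fin d → ℝ)
    (X : ℝ)
    (hX : X = b 0 + b 1 / logMean (1 / TL) (1 / TR)
      + (∑ r ∈ Finset.Icc 2 (np + 1), b r * fAvg (r - 1) TL TR * (TL * TR))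
      - (1 / 2) * ∑ k, ((vL k) ^ 2 + (vR k) ^ 2) / 2) :
    ((g TR ρR - (1 / 2) * ∑ k, (vR k) ^ 2) / TR)
        - ((g TL ρL - (1 / 2) * ∑ k, (vL k) ^ 2) / TL)
      = (1 / TR - 1 / TL) * X
        + Rs * (ρR - ρL) / logMean ρL ρR
        - ∑ k, (vR k - vL k) * ((1 / TL + 1 / TR) / 2) * ((vL k + vR k) / 2) := by
  have hTL0 : TL ≠ 0 := ne_of_gt hTL
  have hTR0 : TR ≠ 0 := ne_of_gt hTR
  -- entropy values
  have hsv : ∀ T ρ : ℝ, 0 < T → 0 < ρ → s T ρ = sref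
      + (((a 0 - Rs) * Real.log T
          + ∑ k ∈ Finset.range np, (a (k + 1) / ((k : ℝ) + 1)) * T ^ (k + 1))
        - ((a 0 - Rs) * Real.log Tref
          + ∑ k ∈ Finset.range np, (a (k + 1) / ((k : ℝ) + 1)) * Tref ^ (k + 1)))
      - Rs * (Real.log ρ - Real.log (W * Cref)) := by
    intro T ρ hT hρ
    rw [hs, int_eval np a Rs Tref T hTref hT,
      Real.log_div (ne_of_gt hρ) (by positivity)]
  -- u values
  have huv : ∀ T : ℝ, T ≠ 0 → u T / T
      = b 0 / T + b 1 + ∑ k ∈ Finset.range np, b (k + 2) * T ^ (k + 1) := by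
    intro T hT
    rw [hu, Finset.sum_range_succ', Finset.sum_range_succ', div_eq_iff hT]
    have hsm : ∑ k ∈ Finset.range np, b (k + 1 + 1) * T ^ (k + 1 + 1)
        = (∑ k ∈ Finset.range np, b (k + 2) * T ^ (k + 1)) * T := by
      rw [Finset.sum_mul]
      exact Finset.sum_congr rfl fun k _ => by ring
    rw [hsm]
    field_simp
    ring
  -- kinetic sums
  have e2 : ∑ k, (vR k - vL k) * ((1 / TL + 1 / TR) / 2) * ((vL k + vR k) / 2)
      = ((1 / TL + 1 / TR) / 4) * ((∑ k, (vR k) ^ 2) - ∑ k, (vL k) ^ 2) := by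
    rw [← Finset.sum_sub_distrib, Finset.mul_sum]
    exact Finset.sum_congr rfl fun k _ => by ring
  have e3 : ∑ k : Fin d, ((vL k) ^ 2 + (vR k) ^ 2) / 2
      = ((∑ k, (vL k) ^ 2) + ∑ k, (vR k) ^ 2) / 2 := by
    rw [← Finset.sum_div, Finset.sum_add_distrib]
  -- logMean facts
  have h1 : Rs * (ρR - ρL) / logMean ρL ρR = Rs * (Real.log ρR - Real.log ρL) := by
    rw [mul_div_assoc, jump_div_logMean ρL ρR hρL hρR]
  have h2 : (1 / TR - 1 / TL) / logMean (1 / TL) (1 / TR)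
      = Real.log TL - Real.log TR := by
    rw [jump_div_logMean (1 / TL) (1 / TR) (by positivity) (by positivity)]
    rw [one_div, one_div, Real.log_inv, Real.log_inv]
    ring
  have e1 := sumP np a b hbk TL TR hTL hTR
  -- expand the goal
  rw [hg, hg, hh, hh, hX]
  rw [hsv TL ρL hTL hρL, hsv TR ρR hTR hρR]
  have expandL : (u TL + Rs * TL - TL * (sref
      + (((a 0 - Rs) * Real.log TL
          + ∑ k ∈ Finset.range np, (a (k + 1) / ((k : ℝ) + 1)) * TL ^ (k + 1))
        - ((a 0 - Rs) * Real.log Tref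
          + ∑ k ∈ Finset.range np, (a (k + 1) / ((k : ℝ) + 1)) * Tref ^ (k + 1)))
      - Rs * (Real.log ρL - Real.log (W * Cref)))
      - (1 / 2) * ∑ k, (vL k) ^ 2) / TL
    = u TL / TL + Rs - (sref
      + (((a 0 - Rs) * Real.log TL
          + ∑ k ∈ Finset.range np, (a (k + 1) / ((k : ℝ) + 1)) * TL ^ (k + 1))
        - ((a 0 - Rs) * Real.log Tref
          + ∑ k ∈ Finset.range np, (a (k + 1) / ((k : ℝ) + 1)) * Tref ^ (k + 1)))
      - Rs * (Real.log ρL - Real.log (W * Cref)))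
      - (1 / 2) * (∑ k, (vL k) ^ 2) / TL := by
    field_simp
  have expandR : (u TR + Rs * TR - TR * (sref
      + (((a 0 - Rs) * Real.log TR
          + ∑ k ∈ Finset.range np, (a (k + 1) / ((k : ℝ) + 1)) * TR ^ (k + 1))
        - ((a 0 - Rs) * Real.log Tref
          + ∑ k ∈ Finset.range np, (a (k + 1) / ((k : ℝ) + 1)) * Tref ^ (k + 1)))
      - Rs * (Real.log ρR - Real.log (W * Cref)))
      - (1 / 2) * ∑ k, (vR k) ^ 2) / TR
    = u TR / TR + Rs - (sref
      + (((a 0 - Rs) * Real.log TR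
          + ∑ k ∈ Finset.range np, (a (k + 1) / ((k : ℝ) + 1)) * TR ^ (k + 1))
        - ((a 0 - Rs) * Real.log Tref
          + ∑ k ∈ Finset.range np, (a (k + 1) / ((k : ℝ) + 1)) * Tref ^ (k + 1)))
      - Rs * (Real.log ρR - Real.log (W * Cref)))
      - (1 / 2) * (∑ k, (vR k) ^ 2) / TR := by
    field_simp
  rw [expandL, expandR, huv TL hTL0, huv TR hTR0, e2, e3]
  linear_combination -e1 - h1 - (b 1) * h2 + hb1 * (Real.log TR - Real.log TL)
end

section
/- Fix d, n_s ≥ 1 and n_p ≥ 0; for each species i fix W_i > 0, R_{s,i} = R⁰/W_i with R⁰ > 0, coefficients a_{i0}, …, a_{i,n_p}, reference constants T_ref > 0, C_ref > 0, s°_{ref,i}, and set b_{i1} = a_{i0} − R_{s,i}, b_{ik} = a_{i,k−1}/k for 2 ≤ k ≤ n_p+1, with b_{i0} ∈ ℝ fixed. For ρ_i > 0, T > 0, v ∈ ℝ^d define u_i(T) = Σ_{k=0}^{n_p+1} b_{ik}T^k, h_i = u_i + R_{s,i}T, s_i = s°_{ref,i} + ∫_{T_ref}^T (Σ_k a_{ik}τ^k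 − R_{s,i})/τ dτ − R_{s,i} log(ρ_i/(W_i C_ref)), g_i = h_i − T s_i, the conservative state y = (ρ₁,…,ρ_{n_s}, ρv₁,…,ρv_d, ρe_t) with ρ = Σ_i ρ_i, ρ e_t = Σ_i ρ_i u_i(T) + ½ρ|v|², the entropy variables v(y) = ((g₁ − ½|v|²)/T, …, (g_{n_s} − ½|v|²)/T, v₁/T, …, v_d/T, −1/T), and the entropy potential 𝒰(y) = Σ_{i=1}^{n_s} R_{s,i} ρ_i. Let y‡(y_L, y_R) be the two-point numerical state with partial-density components ρ_i^ln, momentum components Σ_i ρ_i^ln ⟨v_k⟩, and energy component Σ_k Σ_i ρ_i^ln ⟨v_k⟩⟨v_k⟩ + Σ_i ρ_i^ln [ b_{i0} + b_{i1}/(1/T)^ln + Σ_{r=2}^{n_p+1} b_{ir} f_{r−1}(T_L,T_R) T^× − ½Σ_k ⟨v_k²⟩ ], where ⟨α⟩ = (α_L+α_R)/2, α^× = α_Lα_R, α^ln is the logarithmic mean, and f_r(a,b) = (1/r)Σ_{l=0}^{r−1} a^l b^{r−1−l}. Then for all admissible states y_L, y_R: ( v(y_R) − v(y_L) )ᵀ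 y‡(y_L, y_R) = 𝒰(y_R) − 𝒰(y_L). -/
lemma logMean_key {x y : ℝ} (hx : 0 < x) (hy : 0 < y) :
    (Real.log y - Real.log x) * logMean x y = y - x := by
  unfold logMean
  by_cases hxy : x = y
  · simp [hxy]
  · have hne : Real.log y - Real.log x ≠ 0 := by
      refine sub_ne_zero.mpr fun he => hxy ?_
      exact (Real.log_injOn_pos (Set.mem_Ioi.mpr hx) (Set.mem_Ioi.mpr hy) he.symm)
    rw [if_neg hxy]
    field_simp

lemma fAvg_key (m : ℕ) (x y : ℝ) :
    ((m : ℝ) + 1) * fAvg (m + 1) x y * (x - y) = x ^ (m + 1) - y ^ (m + 1) := by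
  unfold fAvg
  have h1 : ((m : ℝ) + 1) ≠ 0 := by positivity
  have h2 := geom_sum₂_mul x y (m + 1)
  simp only [Nat.add_sub_cancel] at h2 ⊢
  push_cast
  rw [show ((m : ℝ) + 1) * ((1 / ((m:ℝ) + 1)) * ∑ l ∈ Finset.range (m + 1), x ^ l * y ^ (m - l))
    = ∑ l ∈ Finset.range (m + 1), x ^ l * y ^ (m - l) by field_simp]
  exact h2

lemma inv_logMean_key {TL TR : ℝ} (hTL : 0 < TL) (hTR : 0 < TR) (c : ℝ) :
    (1 / TL - 1 / TR) * (c / logMean (1 / TL) (1 / TR))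
      = c * (Real.log TR - Real.log TL) := by
  by_cases hxy : TL = TR
  · subst hxy; simp
  · have key := logMean_key (x := 1 / TL) (y := 1 / TR) (by positivity) (by positivity)
    rw [one_div, one_div, Real.log_inv, Real.log_inv] at key
    have hne : (1 : ℝ) / TL - 1 / TR ≠ 0 := by
      rw [one_div, one_div]
      intro hc
      exact hxy (inv_injective (sub_eq_zero.mp hc))
    have hne' : TR⁻¹ - TL⁻¹ ≠ 0 := by
      intro hc
      apply hne
      rw [one_div, one_div]
      linarith [sub_eq_zero.mp hc, (sub_eq_zero.mp hc).symm]
    have hlm : logMean (1 / TL) (1 / TR) ≠ 0 := by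
      intro hc
      rw [one_div, one_div] at hc
      rw [hc, mul_zero] at key
      exact hne' key.symm
    have hsub : 1 / TL - 1 / TR
        = (Real.log TR - Real.log TL) * logMean (1 / TL) (1 / TR) := by
      rw [one_div, one_div]
      linarith [key]
    rw [hsub, mul_comm]
    field_simp

lemma sum_poly_div (np : ℕ) (bb : ℕ → ℝ) {T : ℝ} (hT : T ≠ 0) :
    (∑ k ∈ Finset.range (np + 2), bb k * T ^ k) / T
      = bb 0 / T + bb 1 + ∑ m ∈ Finset.range np, bb (m + 2) * T ^ (m + 1) := by
  rw [Finset.sum_range_succ' (fun k => bb k * T ^ k) (np + 1),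
      Finset.sum_range_succ' (fun k => bb (k + 1) * T ^ (k + 1)) np]
  rw [show (∑ m ∈ Finset.range np, bb (m + 1 + 1) * T ^ (m + 1 + 1))
      = (∑ m ∈ Finset.range np, bb (m + 2) * T ^ (m + 1)) * T by
    rw [Finset.sum_mul]
    exact Finset.sum_congr rfl fun m _ => by rw [pow_succ]; ring]
  field_simp
  ring

lemma thermo_core (np : ℕ) (aa bb : ℕ → ℝ) (Rs : ℝ)
    (hb1 : bb 1 = aa 0 - Rs)
    (haa : ∀ m, m < np → aa (m + 1) = ((m : ℝ) + 2) * bb (m + 2))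
    {TL TR : ℝ} (hTL : 0 < TL) (hTR : 0 < TR) :
    ((∑ k ∈ Finset.range (np + 2), bb k * TR ^ k) / TR
      - (∑ k ∈ Finset.range (np + 2), bb k * TL ^ k) / TL)
    - ((aa 0 - Rs) * (Real.log TR - Real.log TL)
        + ∑ m ∈ Finset.range np, (aa (m + 1) / ((m : ℝ) + 1)) * (TR ^ (m + 1) - TL ^ (m + 1)))
    + (1 / TL - 1 / TR) * (bb 0 + bb 1 / logMean (1 / TL) (1 / TR)
        + ∑ r ∈ Finset.Icc 2 (np + 1), bb r * fAvg (r - 1) TL TR * (TL * TR)) = 0 := by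
  have hTLne := hTL.ne'
  have hTRne := hTR.ne'
  -- reindex the Icc sum
  have hIcc : (∑ r ∈ Finset.Icc 2 (np + 1), bb r * fAvg (r - 1) TL TR * (TL * TR))
      = ∑ m ∈ Finset.range np, bb (m + 2) * fAvg (m + 1) TL TR * (TL * TR) := by
    rw [← Finset.Ico_add_one_right_eq_Icc, Finset.sum_Ico_eq_sum_range]
    have hnp : np + 1 + 1 - 2 = np := by omega
    rw [hnp]
    refine Finset.sum_congr rfl fun m _ => ?_
    have h1 : 2 + m = m + 2 := by omega
    have h2 : m + 2 - 1 = m + 1 := by omega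
    rw [h1, h2]
  rw [hIcc, sum_poly_div np bb hTRne, sum_poly_div np bb hTLne, ← hb1]
  have hD : (1 / TL - 1 / TR) * (bb 0 + bb 1 / logMean (1 / TL) (1 / TR)
      + ∑ m ∈ Finset.range np, bb (m + 2) * fAvg (m + 1) TL TR * (TL * TR))
      = (1 / TL - 1 / TR) * bb 0 + bb 1 * (Real.log TR - Real.log TL)
        + ∑ m ∈ Finset.range np,
            (1 / TL - 1 / TR) * (bb (m + 2) * fAvg (m + 1) TL TR * (TL * TR)) := by
    rw [mul_add, mul_add, inv_logMean_key hTL hTR, Finset.mul_sum]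
  rw [hD]
  have hterm : ∀ m ∈ Finset.range np,
      bb (m + 2) * TR ^ (m + 1) - bb (m + 2) * TL ^ (m + 1)
      - (aa (m + 1) / ((m : ℝ) + 1)) * (TR ^ (m + 1) - TL ^ (m + 1))
      + (1 / TL - 1 / TR) * (bb (m + 2) * fAvg (m + 1) TL TR * (TL * TR)) = 0 := by
    intro m hm
    rw [haa m (Finset.mem_range.mp hm)]
    have hm1 : ((m : ℝ) + 1) ≠ 0 := by positivity
    have hTT : (1 / TL - 1 / TR) * (bb (m + 2) * fAvg (m + 1) TL TR * (TL * TR))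
        = bb (m + 2) * (fAvg (m + 1) TL TR * (TR - TL)) := by
      field_simp
    rw [hTT]
    have hf2 : fAvg (m + 1) TL TR * (TR - TL)
        = (TR ^ (m + 1) - TL ^ (m + 1)) / ((m : ℝ) + 1) := by
      rw [eq_div_iff hm1]
      linear_combination -fAvg_key m TL TR
    rw [hf2]
    field_simp
    ring
  have hsum : (∑ m ∈ Finset.range np, bb (m + 2) * TR ^ (m + 1))
      - (∑ m ∈ Finset.range np, bb (m + 2) * TL ^ (m + 1))
      - (∑ m ∈ Finset.range np, (aa (m + 1) / ((m : ℝ) + 1)) * (TR ^ (m + 1) - TL ^ (m + 1)))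
      + (∑ m ∈ Finset.range np,
          (1 / TL - 1 / TR) * (bb (m + 2) * fAvg (m + 1) TL TR * (TL * TR))) = 0 := by
    rw [← Finset.sum_sub_distrib, ← Finset.sum_sub_distrib, ← Finset.sum_add_distrib]
    exact Finset.sum_eq_zero hterm
  have hscal : bb 0 / TR - bb 0 / TL + (1 / TL - 1 / TR) * bb 0 = 0 := by
    field_simp
    ring
  linear_combination hsum + hscal

lemma integral_closed (np : ℕ) (a : ℕ → ℝ) (c : ℝ) {Tref T : ℝ}
    (h1 : 0 < Tref) (h2 : 0 < T) :
    (∫ τ in Tref..T, ((∑ k ∈ Finset.range (np + 1), a k * τ ^ k) - c) / τ)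
      = (a 0 - c) * (Real.log T - Real.log Tref)
        + ∑ m ∈ Finset.range np, (a (m + 1) / ((m : ℝ) + 1))
            * (T ^ (m + 1) - Tref ^ (m + 1)) := by
  set F : ℝ → ℝ := fun τ => (a 0 - c) * Real.log τ
      + ∑ m ∈ Finset.range np, (a (m + 1) / ((m : ℝ) + 1)) * τ ^ (m + 1) with hF
  have hmem : ∀ τ ∈ Set.uIcc Tref T, 0 < τ := by
    intro τ hτ
    rcases Set.mem_uIcc.mp hτ with h | h
    · linarith [h.1]
    · linarith [h.1]
  have hderiv : ∀ τ ∈ Set.uIcc Tref T,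
      HasDerivAt F (((∑ k ∈ Finset.range (np + 1), a k * τ ^ k) - c) / τ) τ := by
    intro τ hτ
    have hτ0 : τ ≠ 0 := (hmem τ hτ).ne'
    have hd1 : HasDerivAt (fun τ : ℝ => (a 0 - c) * Real.log τ) ((a 0 - c) / τ) τ := by
      simpa [div_eq_mul_inv, mul_comm] using (Real.hasDerivAt_log hτ0).const_mul (a 0 - c)
    have hd2 : HasDerivAt (fun τ : ℝ => ∑ m ∈ Finset.range np,
        (a (m + 1) / ((m : ℝ) + 1)) * τ ^ (m + 1))
        (∑ m ∈ Finset.range np, a (m + 1) * τ ^ m) τ := by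
      have : ∀ m ∈ Finset.range np, HasDerivAt
          (fun τ : ℝ => (a (m + 1) / ((m : ℝ) + 1)) * τ ^ (m + 1))
          (a (m + 1) * τ ^ m) τ := by
        intro m _
        have := (hasDerivAt_pow (m + 1) τ).const_mul (a (m + 1) / ((m : ℝ) + 1))
        have hm : ((m : ℝ) + 1) ≠ 0 := by positivity
        refine this.congr_deriv ?_
        symm
        push_cast [Nat.add_sub_cancel]
        field_simp
      simpa using HasDerivAt.fun_sum this
    have := hd1.fun_add hd2
    refine this.congr_deriv ?_
    symm
    have hsum : (∑ k ∈ Finset.range (np + 1), a k * τ ^ k)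
        = a 0 + ∑ m ∈ Finset.range np, a (m + 1) * τ ^ (m + 1) := by
      rw [Finset.sum_range_succ']
      simp [add_comm]
    rw [hsum]
    field_simp
    calc a 0 + ∑ m ∈ Finset.range np, a (m + 1) * τ ^ (m + 1) - c
        = a 0 - c + ∑ i ∈ Finset.range np, a (i + 1) * τ ^ (i + 1) := by ring
      _ = a 0 - c + ∑ i ∈ Finset.range np, a (i + 1) * τ ^ i * τ := by
          congr 1
          refine Finset.sum_congr rfl fun m _ => ?_
          rw [pow_succ]; ring
      _ = a 0 - c + (∑ i ∈ Finset.range np, a (i + 1) * τ ^ i) * τ := by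
          rw [Finset.sum_mul]
      _ = a 0 - c + τ * ∑ x ∈ Finset.range np, a (x + 1) * τ ^ x := by ring
  have hcont : IntervalIntegrable
      (fun τ => ((∑ k ∈ Finset.range (np + 1), a k * τ ^ k) - c) / τ)
      MeasureTheory.volume Tref T := by
    apply ContinuousOn.intervalIntegrable
    apply ContinuousOn.div
    · exact (continuous_finset_sum _ fun k _ => by continuity).continuousOn.sub
        continuousOn_const
    · exact continuousOn_id
    · intro τ hτ; exact (hmem τ hτ).ne'
  rw [intervalIntegral.integral_eq_sub_of_hasDerivAt hderiv hcont, hF]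
  simp only []
  have hs2 : ∑ m ∈ Finset.range np, a (m+1) / ((m:ℝ)+1) * (T ^ (m+1) - Tref ^ (m+1))
      = (∑ m ∈ Finset.range np, a (m+1) / ((m:ℝ)+1) * T ^ (m+1))
        - ∑ m ∈ Finset.range np, a (m+1) / ((m:ℝ)+1) * Tref ^ (m+1) := by
    rw [← Finset.sum_sub_distrib]
    exact Finset.sum_congr rfl fun m _ => by ring
  rw [hs2]; ring

/-- Entropy-conservation property of the two-point numerical state (the main
claim of the theorem in Section 6.3.1): for the multicomponent thermally
perfect gas Euler system with entropy variables
`v = ((g₁ − ½|v|²)/T, …, (g_{n_s} − ½|v|²)/T, v₁/T, …, v_d/T, −1/T)` and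
entropy potential `𝒰 = Σᵢ R_{s,i} ρᵢ`, the numerical state `y‡` of
Equations (50)–(51) satisfies `(v_R − v_L)ᵀ y‡ = 𝒰_R − 𝒰_L`. -/
theorem numState_entropy_conservative
    (d ns np : ℕ) (hd : 1 ≤ d) (hns : 1 ≤ ns)
    (R0 : ℝ) (hR0 : 0 < R0)
    (W : Fin ns → ℝ) (hW : ∀ i, 0 < W i)
    (Rs : Fin ns → ℝ) (hRs : ∀ i, Rs i = R0 / W i)
    (a : Fin ns → ℕ → ℝ)
    (Tref Cref : ℝ) (hTref : 0 < Tref) (hCref : 0 < Cref)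
    (sref : Fin ns → ℝ)
    (b : Fin ns → ℕ → ℝ)
    (hb1 : ∀ i, b i 1 = a i 0 - Rs i)
    (hbk : ∀ i k, 2 ≤ k → k ≤ np + 1 → b i k = a i (k - 1) / (k : ℝ))
    (u h : Fin ns → ℝ → ℝ) (s g : Fin ns → ℝ → ℝ → ℝ)
    (hu : ∀ i T, u i T = ∑ k ∈ Finset.range (np + 2), b i k * T ^ k)
    (hh : ∀ i T, h i T = u i T + Rs i * T)
    (hs : ∀ i T ρ, s i T ρ = sref i
      + (∫ τ in Tref..T, ((∑ k ∈ Finset.range (np + 1), a i k * τ ^ k) - Rs i) / τ)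
      - Rs i * Real.log (ρ / (W i * Cref)))
    (hg : ∀ i T ρ, g i T ρ = h i T - T * s i T ρ)
    (ρL ρR : Fin ns → ℝ) (hρL : ∀ i, 0 < ρL i) (hρR : ∀ i, 0 < ρR i)
    (vL vR : Fin d → ℝ) (TL TR : ℝ) (hTL : 0 < TL) (hTR : 0 < TR)
    (Edag : ℝ)
    (hEdag : Edag =
      (∑ k, ∑ i, logMean (ρL i) (ρR i) * ((vL k + vR k) / 2) * ((vL k + vR k) / 2))
      + ∑ i, logMean (ρL i) (ρR i) *
          (b i 0 + b i 1 / logMean (1 / TL) (1 / TR)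
            + (∑ r ∈ Finset.Icc 2 (np + 1), b i r * fAvg (r - 1) TL TR * (TL * TR))
            - (1 / 2) * ∑ k, ((vL k) ^ 2 + (vR k) ^ 2) / 2)) :
    (∑ i, (((g i TR (ρR i) - (1 / 2) * ∑ k, (vR k) ^ 2) / TR)
          - ((g i TL (ρL i) - (1 / 2) * ∑ k, (vL k) ^ 2) / TL))
        * logMean (ρL i) (ρR i))
      + (∑ k, (vR k / TR - vL k / TL)
          * ((∑ i, logMean (ρL i) (ρR i)) * ((vL k + vR k) / 2)))
      + ((-(1 / TR)) - (-(1 / TL))) * Edag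
      = ∑ i, Rs i * (ρR i - ρL i) := by

  have hgT : ∀ i (T ρ : ℝ), 0 < T → 0 < ρ →
      g i T ρ / T = (∑ k ∈ Finset.range (np + 2), b i k * T ^ k) / T + Rs i - sref i
        - ((a i 0 - Rs i) * (Real.log T - Real.log Tref)
           + ∑ m ∈ Finset.range np, (a i (m + 1) / ((m : ℝ) + 1)) * (T ^ (m + 1) - Tref ^ (m + 1)))
        + Rs i * Real.log (ρ / (W i * Cref)) := by
    intro i T ρ hT hρ
    rw [hg, hh, hu, hs, integral_closed np (a i) (Rs i) hTref hT]
    field_simp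
    ring
  have hkey : ∀ i, (g i TR (ρR i) / TR - g i TL (ρL i) / TL)
      + (1 / TL - 1 / TR) * (b i 0 + b i 1 / logMean (1 / TL) (1 / TR)
          + (∑ r ∈ Finset.Icc 2 (np + 1), b i r * fAvg (r - 1) TL TR * (TL * TR)))
      = Rs i * (Real.log (ρR i) - Real.log (ρL i)) := by
    intro i
    have haa : ∀ m, m < np → a i (m + 1) = ((m : ℝ) + 2) * b i (m + 2) := by
      intro m hm
      have hb := hbk i (m + 2) (by omega) (by omega)
      have h2 : m + 2 - 1 = m + 1 := by omega
      rw [h2] at hb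
      rw [hb]
      have h3 : ((m + 2 : ℕ) : ℝ) = (m : ℝ) + 2 := by push_cast; ring
      rw [h3]
      field_simp
    have hc := thermo_core np (a i) (b i) (Rs i) (hb1 i) haa hTL hTR
    rw [hgT i TR (ρR i) hTR (hρR i), hgT i TL (ρL i) hTL (hρL i)]
    have hlR : Real.log (ρR i / (W i * Cref))
        = Real.log (ρR i) - Real.log (W i * Cref) :=
      Real.log_div (hρR i).ne' (mul_pos (hW i) hCref).ne'
    have hlL : Real.log (ρL i / (W i * Cref))
        = Real.log (ρL i) - Real.log (W i * Cref) :=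
      Real.log_div (hρL i).ne' (mul_pos (hW i) hCref).ne'
    rw [hlR, hlL]
    have hsub : (∑ m ∈ Finset.range np, (a i (m + 1) / ((m : ℝ) + 1)) * (TR ^ (m + 1) - Tref ^ (m + 1)))
        - (∑ m ∈ Finset.range np, (a i (m + 1) / ((m : ℝ) + 1)) * (TL ^ (m + 1) - Tref ^ (m + 1)))
        = ∑ m ∈ Finset.range np, (a i (m + 1) / ((m : ℝ) + 1)) * (TR ^ (m + 1) - TL ^ (m + 1)) := by
      rw [← Finset.sum_sub_distrib]
      exact Finset.sum_congr rfl fun m _ => by ring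
    linear_combination hc - hsub
  have hG1 : (∑ i, (((g i TR (ρR i) - (1 / 2) * ∑ k, (vR k) ^ 2) / TR)
          - ((g i TL (ρL i) - (1 / 2) * ∑ k, (vL k) ^ 2) / TL))
        * logMean (ρL i) (ρR i))
      = (∑ i, (g i TR (ρR i) / TR - g i TL (ρL i) / TL) * logMean (ρL i) (ρR i))
        - (((1 / 2) * ∑ k, (vR k) ^ 2) / TR - ((1 / 2) * ∑ k, (vL k) ^ 2) / TL)
          * (∑ i, logMean (ρL i) (ρR i)) := by
    rw [Finset.mul_sum Finset.univ (fun i => logMean (ρL i) (ρR i))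
      (((1 / 2) * ∑ k, (vR k) ^ 2) / TR - ((1 / 2) * ∑ k, (vL k) ^ 2) / TL),
      ← Finset.sum_sub_distrib]
    exact Finset.sum_congr rfl fun i _ => by rw [sub_div, sub_div]; ring
  have hG2 : (∑ k, (vR k / TR - vL k / TL)
          * ((∑ i, logMean (ρL i) (ρR i)) * ((vL k + vR k) / 2)))
      = (∑ i, logMean (ρL i) (ρR i))
        * ∑ k, (vR k / TR - vL k / TL) * ((vL k + vR k) / 2) := by
    rw [Finset.mul_sum]
    exact Finset.sum_congr rfl fun k _ => by ring
  have hE1 : (∑ k, ∑ i, logMean (ρL i) (ρR i) * ((vL k + vR k) / 2) * ((vL k + vR k) / 2))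
      = (∑ i, logMean (ρL i) (ρR i))
        * ∑ k, ((vL k + vR k) / 2) * ((vL k + vR k) / 2) := by
    rw [Finset.mul_sum]
    exact Finset.sum_congr rfl fun k _ => by
      rw [← Finset.sum_mul, ← Finset.sum_mul, mul_assoc]
  have hE2 : (∑ i, logMean (ρL i) (ρR i) *
          (b i 0 + b i 1 / logMean (1 / TL) (1 / TR)
            + (∑ r ∈ Finset.Icc 2 (np + 1), b i r * fAvg (r - 1) TL TR * (TL * TR))
            - (1 / 2) * ∑ k, ((vL k) ^ 2 + (vR k) ^ 2) / 2))
      = (∑ i, logMean (ρL i) (ρR i) *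
          (b i 0 + b i 1 / logMean (1 / TL) (1 / TR)
            + (∑ r ∈ Finset.Icc 2 (np + 1), b i r * fAvg (r - 1) TL TR * (TL * TR))))
        - ((1 / 2) * ∑ k, ((vL k) ^ 2 + (vR k) ^ 2) / 2)
          * (∑ i, logMean (ρL i) (ρR i)) := by
    rw [Finset.mul_sum Finset.univ (fun i => logMean (ρL i) (ρR i))
      ((1 / 2) * ∑ k, ((vL k) ^ 2 + (vR k) ^ 2) / 2),
      ← Finset.sum_sub_distrib]
    exact Finset.sum_congr rfl fun i _ => by ring
  have hkeysum : (∑ i, (g i TR (ρR i) / TR - g i TL (ρL i) / TL) * logMean (ρL i) (ρR i))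
      + (1 / TL - 1 / TR) * (∑ i, logMean (ρL i) (ρR i) *
          (b i 0 + b i 1 / logMean (1 / TL) (1 / TR)
            + (∑ r ∈ Finset.Icc 2 (np + 1), b i r * fAvg (r - 1) TL TR * (TL * TR))))
      = ∑ i, Rs i * (ρR i - ρL i) := by
    rw [Finset.mul_sum, ← Finset.sum_add_distrib]
    refine Finset.sum_congr rfl fun i _ => ?_
    have h1 := hkey i
    have h2 := logMean_key (hρL i) (hρR i)
    linear_combination (logMean (ρL i) (ρR i)) * h1 + (Rs i) * h2
  have hvel : -(((1 / 2) * ∑ k, (vR k) ^ 2) / TR - ((1 / 2) * ∑ k, (vL k) ^ 2) / TL)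
      + (∑ k, (vR k / TR - vL k / TL) * ((vL k + vR k) / 2))
      + (1 / TL - 1 / TR) * ((∑ k, ((vL k + vR k) / 2) * ((vL k + vR k) / 2))
          - (1 / 2) * ∑ k, ((vL k) ^ 2 + (vR k) ^ 2) / 2) = 0 := by
    have e1 : ((1 / 2) * ∑ k, (vR k) ^ 2) / TR = ∑ k, (vR k) ^ 2 * (1 / (2 * TR)) := by
      rw [← Finset.sum_mul]
      field_simp
    have e2 : ((1 / 2) * ∑ k, (vL k) ^ 2) / TL = ∑ k, (vL k) ^ 2 * (1 / (2 * TL)) := by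
      rw [← Finset.sum_mul]
      field_simp
    have e4 : (1 / 2) * ∑ k, ((vL k) ^ 2 + (vR k) ^ 2) / 2
        = ∑ k, ((vL k) ^ 2 + (vR k) ^ 2) / 4 := by
      rw [Finset.mul_sum]
      exact Finset.sum_congr rfl fun k _ => by ring
    rw [e1, e2, e4, ← Finset.sum_sub_distrib, ← Finset.sum_sub_distrib, Finset.mul_sum,
      ← Finset.sum_neg_distrib, ← Finset.sum_add_distrib, ← Finset.sum_add_distrib]
    refine Finset.sum_eq_zero fun k _ => ?_
    field_simp
    ring
  rw [hEdag]
  linear_combination hG1 + hG2 + ((-(1 / TR)) - (-(1 / TL))) * hE1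
    + ((-(1 / TR)) - (-(1 / TL))) * hE2 + hkeysum
    + (∑ i, logMean (ρL i) (ρR i)) * hvel
end

section
/- Let m ≥ 1, n ≥ 2, and let Q ∈ ℝ^{n×n} satisfy Q + Qᵀ = B, where B is the diagonal matrix with B₁₁ = −1, B_{nn} = 1, and all other entries zero, and Q·𝟙 = 0 where 𝟙 is the all-ones vector. Let D ⊆ ℝ^m, and let U : D → ℝ, v : D → ℝ^m, 𝒰 : D → ℝ satisfy 𝒰(y) = v(y)ᵀ y − U(y) for all y ∈ D. Let F : D × D → ℝ^m be symmetric (F(a,b) = F(b,a)), consistent (F(y,y) = y), and entropy-conservative: ( v(b) − v(a) )ᵀ F(a,b) = 𝒰(b) − 𝒰(a) for all a, b ∈ D. Then for any y₁, …, y_n ∈ D: 2 Σ_{i=1}^n Σ_{j=1}^n Q_{ij} v(y_i)ᵀ F(y_i, y_j) = U(y_n) − U(y₁). -/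
/-- Summation-by-parts telescoping identity underlying the entropy-stability
proof of the temporal DG scheme (Section 6.3.2): if `Q + Qᵀ = B` with
`B = diag(−1, 0, …, 0, 1)`, `Q𝟙 = 0`, `𝒰 = vᵀy − U`, and `F` is a symmetric,
consistent, entropy-conservative two-point numerical state, then
`2 Σᵢⱼ Qᵢⱼ v(yᵢ)ᵀ F(yᵢ,yⱼ) = U(y_n) − U(y₁)`. -/
theorem sbp_telescoping_identity
    (m n : ℕ) (hm : 1 ≤ m) (hn : 2 ≤ n)
    (Q : Matrix (Fin n) (Fin n) ℝ)
    (hSBP : Q + Q.transpose = Matrix.of (fun (i j : Fin n) =>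
      if i = j ∧ (i : ℕ) = 0 then (-1 : ℝ)
      else if i = j ∧ (i : ℕ) = n - 1 then 1 else 0))
    (hQ1 : Q.mulVec (fun _ => 1) = 0)
    (D : Set (Fin m → ℝ))
    (U 𝒰 : (Fin m → ℝ) → ℝ) (v : (Fin m → ℝ) → (Fin m → ℝ))
    (F : (Fin m → ℝ) → (Fin m → ℝ) → (Fin m → ℝ))
    (h𝒰 : ∀ y ∈ D, 𝒰 y = (∑ l, v y l * y l) - U y)
    (hsymm : ∀ a ∈ D, ∀ b ∈ D, F a b = F b a)
    (hcons : ∀ y ∈ D, F y y = y)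
    (hEC : ∀ a ∈ D, ∀ b ∈ D, (∑ l, (v b l - v a l) * F a b l) = 𝒰 b - 𝒰 a)
    (y : Fin n → (Fin m → ℝ)) (hy : ∀ i, y i ∈ D) :
    2 * ∑ i, ∑ j, Q i j * (∑ l, v (y i) l * F (y i) (y j) l)
      = U (y ⟨n - 1, by omega⟩) - U (y ⟨0, by omega⟩) := by
  classical
  set t : Fin n → Fin n → ℝ := fun i j => ∑ l, v (y i) l * F (y i) (y j) l with ht
  set c : Fin n → ℝ := fun i =>
    if (i : ℕ) = 0 then (-1 : ℝ) else if (i : ℕ) = n - 1 then 1 else 0 with hc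
  -- SBP entrywise
  have hQB : ∀ i j, Q i j + Q j i = if i = j then c i else 0 := by
    intro i j
    have := congrFun (congrFun hSBP i) j
    simp only [Matrix.add_apply, Matrix.transpose_apply, Matrix.of_apply] at this
    rw [this]
    by_cases h : i = j <;> simp [hc, h]
  -- row sums vanish
  have hrow : ∀ i, (∑ j, Q i j) = 0 := by
    intro i
    have := congrFun hQ1 i
    simpa [Matrix.mulVec, dotProduct] using this
  -- column sums
  have hcol : ∀ j, (∑ i, Q i j) = c j := by
    intro j
    have : (∑ i, Q i j) = ∑ i, ((if i = j then c i else 0) - Q j i) := by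
      apply Finset.sum_congr rfl
      intro i _
      have := hQB i j
      linarith
    rw [this, Finset.sum_sub_distrib, hrow, Finset.sum_ite_eq' Finset.univ j c]
    simp
  -- key pointwise identity: t i j = (𝒰 (y i) - 𝒰 (y j)) + t j i
  have htij : ∀ i j, t i j = (𝒰 (y i) - 𝒰 (y j)) + t j i := by
    intro i j
    have hec := hEC (y j) (hy j) (y i) (hy i)
    have hs : F (y j) (y i) = F (y i) (y j) := hsymm _ (hy j) _ (hy i)
    rw [hs] at hec
    have : (∑ l, (v (y i) l - v (y j) l) * F (y i) (y j) l)
        = t i j - ∑ l, v (y j) l * F (y i) (y j) l := by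
      rw [ht]
      rw [← Finset.sum_sub_distrib]
      apply Finset.sum_congr rfl
      intro l _
      ring
    rw [this] at hec
    have htji : t j i = ∑ l, v (y j) l * F (y i) (y j) l := by
      rw [ht]; simp only []
      apply Finset.sum_congr rfl
      intro l _
      rw [hs]
    rw [htji]
    linarith
  have hnn : (0 : ℕ) ≠ n - 1 := by omega
  -- diagonal consistency value
  have htii : ∀ i, t i i = ∑ l, v (y i) l * (y i) l := by
    intro i
    rw [ht]; simp only []
    rw [hcons (y i) (hy i)]
  -- main computation
  have key : 2 * (∑ i, ∑ j, Q i j * t i j)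
      = (∑ i, ∑ j, Q i j * (𝒰 (y i) - 𝒰 (y j)))
        + ∑ i, ∑ j, (Q i j + Q j i) * t j i := by
    have hswap : (∑ i, ∑ j, Q i j * t i j) = ∑ i, ∑ j, Q j i * t j i :=
      Finset.sum_comm
    calc 2 * (∑ i, ∑ j, Q i j * t i j)
        = (∑ i, ∑ j, Q i j * t i j) + ∑ i, ∑ j, Q j i * t j i := by
          rw [← hswap]; ring
      _ = ∑ i, ∑ j, (Q i j * t i j + Q j i * t j i) := by
          rw [← Finset.sum_add_distrib]
          apply Finset.sum_congr rfl
          intro i _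
          rw [← Finset.sum_add_distrib]
      _ = ∑ i, ∑ j, (Q i j * (𝒰 (y i) - 𝒰 (y j)) + (Q i j + Q j i) * t j i) := by
          apply Finset.sum_congr rfl; intro i _
          apply Finset.sum_congr rfl; intro j _
          rw [htij i j]; ring
      _ = _ := by
          rw [← Finset.sum_add_distrib]
          apply Finset.sum_congr rfl
          intro i _
          rw [← Finset.sum_add_distrib]
  -- part A
  have partA : (∑ i, ∑ j, Q i j * (𝒰 (y i) - 𝒰 (y j)))
      = -(∑ j, c j * 𝒰 (y j)) := by
    have e1 : (∑ i, ∑ j, Q i j * (𝒰 (y i) - 𝒰 (y j)))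
        = (∑ i, ∑ j, Q i j * 𝒰 (y i)) - ∑ i, ∑ j, Q i j * 𝒰 (y j) := by
      simp_rw [mul_sub, Finset.sum_sub_distrib]
    have e2 : (∑ i, ∑ j, Q i j * 𝒰 (y i)) = 0 := by
      apply Finset.sum_eq_zero; intro i _
      rw [← Finset.sum_mul, hrow]; ring
    have e3 : (∑ i, ∑ j, Q i j * 𝒰 (y j)) = ∑ j, c j * 𝒰 (y j) := by
      rw [Finset.sum_comm]
      apply Finset.sum_congr rfl; intro j _
      rw [← Finset.sum_mul, hcol]
    rw [e1, e2, e3]; ring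
  -- part B
  have partB : (∑ i, ∑ j, (Q i j + Q j i) * t j i) = ∑ i, c i * t i i := by
    apply Finset.sum_congr rfl
    intro i _
    have : (∑ j, (Q i j + Q j i) * t j i)
        = ∑ j, (if i = j then c i else 0) * t j i := by
      apply Finset.sum_congr rfl; intro j _; rw [hQB]
    rw [this]
    simp_rw [ite_mul, zero_mul]
    rw [Finset.sum_ite_eq Finset.univ i (fun j => c i * t j i)]
    simp
  -- evaluating sums against c
  have csum : ∀ w : Fin n → ℝ, (∑ i, c i * w i)
      = w ⟨n - 1, by omega⟩ - w ⟨0, by omega⟩ := by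
    intro w
    have : ∀ i : Fin n, c i * w i
        = (if i = (⟨n - 1, by omega⟩ : Fin n) then w i else 0)
          - (if i = (⟨0, by omega⟩ : Fin n) then w i else 0) := by
      intro i
      rcases eq_or_ne (i : ℕ) 0 with h0 | h0
      · have hne : i ≠ (⟨n - 1, by omega⟩ : Fin n) := by
          intro h
          have h' : (i : ℕ) = n - 1 := congrArg Fin.val h
          omega
        rw [if_neg hne, if_pos (Fin.ext h0)]
        have hcv : c i = -1 := by rw [hc]; simp [h0]
        rw [hcv]; ring
      · rcases eq_or_ne (i : ℕ) (n - 1) with h1 | h1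
        · have hne : i ≠ (⟨0, by omega⟩ : Fin n) := by
            intro h
            have h' : (i : ℕ) = 0 := congrArg Fin.val h
            omega
          rw [if_pos (Fin.ext h1), if_neg hne]
          have hcv : c i = 1 := by
            rw [hc]; simp [h1, show n - 1 ≠ 0 by omega]
          rw [hcv]; ring
        · have hne1 : i ≠ (⟨n - 1, by omega⟩ : Fin n) := by
            intro h
            have h' : (i : ℕ) = n - 1 := congrArg Fin.val h
            omega
          have hne2 : i ≠ (⟨0, by omega⟩ : Fin n) := by
            intro h
            have h' : (i : ℕ) = 0 := congrArg Fin.val h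
            omega
          rw [if_neg hne1, if_neg hne2]
          have hcv : c i = 0 := by rw [hc]; simp [h0, h1]
          rw [hcv]; ring
    calc (∑ i, c i * w i)
        = ∑ i, ((if i = (⟨n - 1, by omega⟩ : Fin n) then w i else 0)
          - (if i = (⟨0, by omega⟩ : Fin n) then w i else 0)) := by
          apply Finset.sum_congr rfl; intro i _; exact this i
      _ = _ := by
          rw [Finset.sum_sub_distrib, Finset.sum_ite_eq' Finset.univ _ w,
            Finset.sum_ite_eq' Finset.univ _ w]
          simp
  -- assemble
  rw [← ht] at *
  rw [key, partA, partB, csum (fun j => 𝒰 (y j)), csum (fun i => t i i)]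
  rw [htii, htii]
  rw [h𝒰 _ (hy _), h𝒰 _ (hy _)]
  ring
end

section
/- Fix d, n_s ≥ 1 and n_p ≥ 0; for each species i fix W_i > 0, R_{s,i} = R⁰/W_i with R⁰ > 0, coefficients b_{i0}, …, b_{i,n_p+1}, and arbitrary real functions s_i = s_i(T, ρ_i) (the species specific entropies). For ρ_i > 0, T > 0, v ∈ ℝ^d, define u_i(T) = Σ_{k=0}^{n_p+1} b_{ik}T^k, h_i = u_i + R_{s,i}T, g_i = h_i − T s_i, ρ = Σ_i ρ_i, s = Σ_i (ρ_i/ρ) s_i, the conservative state y = (ρ₁, …, ρ_{n_s}, ρv₁, …, ρv_d, ρe_t) with ρe_t = Σ_i ρ_i u_i(T) + ½ρ|v|², and the entropy variables vector v(y) = ((g₁ − ½|v|²)/T, …, (g_{n_s} − ½|v|²)/T, v₁/T, …, v_d/T, −1/T). Then v(y)ᵀ y + ρ s = Σ_{i=1}^{n_s} R_{s,i} ρ_i; that is, the entropy potential 𝒰 = v(y)ᵀy − U with U = −ρs equals P/T where P = Σ_i ρ_i R_{s,i} T is the mixture pressure. -/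
/-- Computation of the entropy potential (Section 6.3.1): for the
multicomponent thermally perfect gas Euler system with entropy function
`U = −ρs`, entropy variables
`v = ((g₁ − ½|v|²)/T, …, (g_{n_s} − ½|v|²)/T, v₁/T, …, v_d/T, −1/T)`, the
entropy potential `𝒰 = vᵀy − U = vᵀy + ρs` equals `P/T = Σᵢ R_{s,i} ρᵢ`. -/
theorem entropy_potential_identity
    (d ns np : ℕ) (hd : 1 ≤ d) (hns : 1 ≤ ns)
    (R0 : ℝ) (hR0 : 0 < R0)
    (W : Fin ns → ℝ) (hW : ∀ i, 0 < W i)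
    (Rs : Fin ns → ℝ) (hRs : ∀ i, Rs i = R0 / W i)
    (b : Fin ns → ℕ → ℝ)
    (sfun : Fin ns → ℝ → ℝ → ℝ)
    (ρ : Fin ns → ℝ) (hρ : ∀ i, 0 < ρ i)
    (T : ℝ) (hT : 0 < T)
    (v : Fin d → ℝ)
    (u h g : Fin ns → ℝ)
    (hu : ∀ i, u i = ∑ k ∈ Finset.range (np + 2), b i k * T ^ k)
    (hh : ∀ i, h i = u i + Rs i * T)
    (hg : ∀ i, g i = h i - T * sfun i T (ρ i))
    (rho s ρet : ℝ)
    (hrho : rho = ∑ i, ρ i)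
    (hsmix : s = ∑ i, (ρ i / rho) * sfun i T (ρ i))
    (hρet : ρet = (∑ i, ρ i * u i) + (1 / 2) * rho * ∑ k, (v k) ^ 2) :
    (∑ i, ((g i - (1 / 2) * ∑ k, (v k) ^ 2) / T) * ρ i)
      + (∑ k, (v k / T) * (rho * v k))
      + (-(1 / T)) * ρet
      + rho * s
      = ∑ i, Rs i * ρ i := by
  have hT0 : T ≠ 0 := ne_of_gt hT
  have hrho0 : rho ≠ 0 := by
    rw [hrho]
    exact ne_of_gt (Finset.sum_pos (fun i _ => hρ i) (Finset.univ_nonempty_iff.mpr ⟨⟨0, hns⟩⟩))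
  set K : ℝ := ∑ k, (v k) ^ 2 with hK
  have hs' : rho * s = ∑ i, ρ i * sfun i T (ρ i) := by
    rw [hsmix, Finset.mul_sum]
    refine Finset.sum_congr rfl fun i _ => ?_
    field_simp
  have h2 : ∑ k, (v k / T) * (rho * v k) = (rho / T) * K := by
    rw [hK, Finset.mul_sum]
    refine Finset.sum_congr rfl fun k _ => ?_
    ring
  have h1 : ∑ i, ((g i - (1 / 2) * K) / T) * ρ i
      = ∑ i, (ρ i * u i / T + Rs i * ρ i - ρ i * sfun i T (ρ i)
          - ((1 / 2) * K / T) * ρ i) := by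
    refine Finset.sum_congr rfl fun i _ => ?_
    rw [hg, hh]
    field_simp
  have h3 : ∑ i, (ρ i * u i / T + Rs i * ρ i - ρ i * sfun i T (ρ i)
          - ((1 / 2) * K / T) * ρ i)
      = (∑ i, ρ i * u i) / T + (∑ i, Rs i * ρ i)
        - (∑ i, ρ i * sfun i T (ρ i)) - ((1 / 2) * K / T) * rho := by
    rw [Finset.sum_sub_distrib, Finset.sum_sub_distrib, Finset.sum_add_distrib,
      ← Finset.sum_div, ← Finset.mul_sum, hrho]
  rw [h1, h3, h2, hρet, ← hs']
  field_simp
  ring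
end
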